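/- Let r > 0 and 0 < ε ≤ 2r, and let S be a set of unit quaternions such that for every unit quaternion p there exists s ∈ S with arccos |(p * star s).re| < arcsin (ε / (2r)). Then for every unit quaternion p there exists s ∈ S with 2 · ‖Im (p * star s)‖ · r < ε; that is, every orientation is within displacement less than ε of some sample in S. -/

import Mathlib

lemma quat_im_norm_sq (q : Quaternion ℝ) :
    ‖q.im‖ ^ 2 = ‖q‖ ^ 2 - q.re ^ 2 := by
  have h1 : ‖q.im‖ ^ 2 = Quaternion.normSq q.im := by
    rw [pow_two, ← Quaternion.normSq_eq_norm_mul_self]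
  have h2 : ‖q‖ ^ 2 = Quaternion.normSq q := by
    rw [pow_two, ← Quaternion.normSq_eq_norm_mul_self]
  rw [h1, h2, Quaternion.normSq_def', Quaternion.normSq_def']
  simp [Quaternion.im, QuaternionAlgebra.im]
  ring

/-- If a set `S` of unit quaternions has dispersion smaller than `arcsin (ε / (2r))`,
then every orientation is within displacement less than `ε` of some sample in `S`. -/
theorem displacement_lt_of_dispersion_lt_arcsin
    (r ε : ℝ) (hr : 0 < r) (hε : 0 < ε) (hεr : ε ≤ 2 * r)
    (S : Set (Quaternion ℝ)) (hS : ∀ s ∈ S, ‖s‖ = 1)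
    (hdisp : ∀ p : Quaternion ℝ, ‖p‖ = 1 →
      ∃ s ∈ S, Real.arccos |(p * star s).re| < Real.arcsin (ε / (2 * r))) :
    ∀ p : Quaternion ℝ, ‖p‖ = 1 → ∃ s ∈ S, 2 * ‖(p * star s).im‖ * r < ε := by
  intro p hp
  obtain ⟨s, hsS, hlt⟩ := hdisp p hp
  refine ⟨s, hsS, ?_⟩
  set q := p * star s with hq
  have hqn : ‖q‖ = 1 := by
    rw [hq, norm_mul, hp, norm_star, hS s hsS]; ring
  set t := ε / (2 * r) with ht
  have htpos : 0 < t := div_pos hε (by linarith)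
  have ht1 : t ≤ 1 := by
    rw [ht, div_le_one (by linarith)]; exact hεr
  -- |q.re| ≤ 1
  have hre : |q.re| ≤ 1 := by
    have h := quat_im_norm_sq q
    rw [hqn] at h
    nlinarith [sq_nonneg (‖q.im‖), abs_nonneg q.re, sq_abs q.re]
  -- cos(arcsin t) < cos(arccos |q.re|) = |q.re|
  have hcoslt : Real.cos (Real.arcsin t) < |q.re| := by
    have h1 : Real.cos (Real.arccos |q.re|) = |q.re| :=
      Real.cos_arccos (by linarith [abs_nonneg q.re]) hre
    have h2 : Real.cos (Real.arccos |q.re|) > Real.cos (Real.arcsin t) := by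
      apply Real.cos_lt_cos_of_nonneg_of_le_pi
      · exact Real.arccos_nonneg _
      · linarith [Real.arcsin_le_pi_div_two t, Real.pi_pos]
      · exact hlt
    linarith
  have hcos : Real.cos (Real.arcsin t) = Real.sqrt (1 - t ^ 2) := Real.cos_arcsin t
  have hsq : 1 - t ^ 2 < q.re ^ 2 := by
    have h0 : Real.sqrt (1 - t ^ 2) < |q.re| := by rwa [hcos] at hcoslt
    nlinarith [Real.sq_sqrt (show (0:ℝ) ≤ 1 - t ^ 2 by nlinarith),
      Real.sqrt_nonneg (1 - t ^ 2), sq_abs q.re]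
  have him : ‖q.im‖ ^ 2 < t ^ 2 := by
    have h := quat_im_norm_sq q
    rw [hqn] at h
    nlinarith
  have himlt : ‖q.im‖ < t := by
    nlinarith [norm_nonneg q.im]
  calc 2 * ‖q.im‖ * r < 2 * t * r := by nlinarith
    _ = ε := by rw [ht]; field_simp
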